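/- Let L₃ be a finite separable field extension of a field L, let L₁ and L₂ be intermediate fields of L₃/L with L₁ ∩ L₂ = L, and let L̄ be an algebraic closure of L. If f₁ : Hom_L(L₁, L̄) → ℤ and f₂ : Hom_L(L₂, L̄) → ℤ are functions satisfying f₁(φ|_{L₁}) = f₂(φ|_{L₂}) for every φ ∈ Hom_L(L₃, L̄), then there exists an integer n such that f₁ and f₂ are both the constant function with value n. Equivalently, the sequence 0 → ℤ → ℤ^{Hom_L(L₁,L̄)} ⊕ ℤ^{Hom_L(L₂,L̄)} → ℤ^{Hom_L(L₃,L̄)}, where the first map is the diagonal embedding of constants and the second sends (f₁,f₂) to the function φ ↦ f₁(φ|_{L₁}) − f₂(φ|_{L₂}), is exact. -/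

import Mathlib

set_option maxHeartbeats 1000000
set_option synthInstance.maxHeartbeats 400000

section Aux

variable {L L₃ : Type*} [Field L] [Field L₃] [Algebra L L₃]

/-- Any `L`-embedding of an intermediate field into the algebraic closure extends to `L₃`. -/
theorem aux_extend [FiniteDimensional L L₃] (L₁ : IntermediateField L L₃)
    (ψ : L₁ →ₐ[L] AlgebraicClosure L) :
    ∃ φ : L₃ →ₐ[L] AlgebraicClosure L, φ.comp L₁.val = ψ := by
  letI : Algebra L₁ (AlgebraicClosure L) := ψ.toRingHom.toAlgebra
  haveI : IsScalarTower L L₁ (AlgebraicClosure L) :=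
    IsScalarTower.of_algebraMap_eq fun x => (ψ.commutes x).symm
  haveI : Algebra.IsAlgebraic L₁ L₃ := Algebra.IsAlgebraic.of_finite L₁ L₃
  let φ₀ : L₃ →ₐ[L₁] AlgebraicClosure L := IsAlgClosed.lift
  refine ⟨φ₀.restrictScalars L, ?_⟩
  ext x
  have h := φ₀.commutes x
  simp at h ⊢
  exact h

end Aux

/-- Character-group exactness: if `L₃/L` is finite separable, `L₁, L₂` are intermediate fields
with `L₁ ∩ L₂ = L`, and `f₁, f₂` are integer-valued functions on `Hom_L(L₁, L̄)` and
`Hom_L(L₂, L̄)` such that `f₁(φ|_{L₁}) = f₂(φ|_{L₂})` for all `φ ∈ Hom_L(L₃, L̄)`,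
then `f₁` and `f₂` are both constant with the same value. -/
theorem exists_const_of_restriction_eq
    {L L₃ : Type*} [Field L] [Field L₃] [Algebra L L₃]
    [FiniteDimensional L L₃] [Algebra.IsSeparable L L₃]
    (L₁ L₂ : IntermediateField L L₃) (hmeet : L₁ ⊓ L₂ = ⊥)
    (f₁ : (L₁ →ₐ[L] AlgebraicClosure L) → ℤ)
    (f₂ : (L₂ →ₐ[L] AlgebraicClosure L) → ℤ)
    (h : ∀ φ : L₃ →ₐ[L] AlgebraicClosure L,
      f₁ (φ.comp L₁.val) = f₂ (φ.comp L₂.val)) :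
    ∃ n : ℤ, (∀ ψ, f₁ ψ = n) ∧ (∀ ψ, f₂ ψ = n) := by
  classical
  set Ω := AlgebraicClosure L
  set N : IntermediateField L Ω := IntermediateField.normalClosure L L₃ Ω with hN
  -- instances on N
  haveI : Algebra.IsSeparable L N := by
    haveI : ∀ f : L₃ →ₐ[L] Ω, Algebra.IsSeparable L f.fieldRange := fun f =>
      Algebra.IsSeparable.of_equiv_equiv (RingEquiv.refl L)
        ((show L₃ ≃ₐ[L] ↥f.fieldRange from AlgEquiv.ofInjectiveField f).toRingEquiv)
        (by ext x
            show algebraMap L Ω x = f (algebraMap L L₃ x)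
            exact (f.commutes x).symm)
    rw [hN, normalClosure_def]
    infer_instance
  haveI : IsGalois L N := ⟨⟩
  -- corestriction of homs to N
  have hmemN : ∀ (φ : L₃ →ₐ[L] Ω) (x : L₃), φ x ∈ N := fun φ x =>
    φ.fieldRange_le_normalClosure ⟨x, rfl⟩
  let cores : (L₃ →ₐ[L] Ω) → (L₃ →ₐ[L] N) := fun φ =>
    φ.codRestrict N.toSubalgebra (hmemN φ)
  have hcores : ∀ (φ : L₃ →ₐ[L] Ω), N.val.comp (cores φ) = φ := fun φ => rfl
  -- the function on Hom(L₃, N)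
  let g : (L₃ →ₐ[L] N) → ℤ := fun φ => f₁ ((N.val.comp φ).comp L₁.val)
  have hg₂ : ∀ φ : L₃ →ₐ[L] N, g φ = f₂ ((N.val.comp φ).comp L₂.val) := fun φ =>
    h (N.val.comp φ)
  -- key: g is constant
  have hconst : ∀ φ φ' : L₃ →ₐ[L] N, g φ = g φ' := by
    intro φ φ'
    -- transitive action
    obtain ⟨σ, hσ⟩ : ∃ σ : N ≃ₐ[L] N, ∀ x, σ (φ x) = φ' x := by
      let e₁ : L₃ ≃ₐ[L] ↥φ.fieldRange := AlgEquiv.ofInjectiveField φ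
      let e₂ : L₃ ≃ₐ[L] ↥φ'.fieldRange := AlgEquiv.ofInjectiveField φ'
      let e := e₁.symm.trans e₂
      refine ⟨e.liftNormal N, fun x => ?_⟩
      have h1 : φ x = algebraMap (↥φ.fieldRange) N (e₁ x) := rfl
      rw [h1, AlgEquiv.liftNormal_commutes]
      simp only [e, AlgEquiv.trans_apply, AlgEquiv.symm_apply_apply]
      rfl
    -- subgroups
    set M₁ : IntermediateField L N := (φ.comp L₁.val).fieldRange with hM₁
    set M₂ : IntermediateField L N := (φ.comp L₂.val).fieldRange with hM₂
    have hMinf : M₁ ⊓ M₂ = ⊥ := by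
      refine le_antisymm (fun x hx => ?_) bot_le
      obtain ⟨⟨a, ha⟩, ⟨b, hb⟩⟩ := hx
      have hab : (a : L₃) = (b : L₃) := φ.toRingHom.injective (ha.trans hb.symm)
      have hmem : (a : L₃) ∈ L₁ ⊓ L₂ := ⟨a.2, hab ▸ b.2⟩
      rw [hmeet, IntermediateField.mem_bot] at hmem
      obtain ⟨c, hc⟩ := hmem
      refine IntermediateField.mem_bot.2 ⟨c, ?_⟩
      rw [← ha]
      show algebraMap L (↥N) c = φ (a : L₃)
      rw [← hc]
      exact (φ.commutes c).symm
    -- Galois correspondence: the fixing subgroups generate everything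
    have hsup : M₁.fixingSubgroup ⊔ M₂.fixingSubgroup = ⊤ := by
      have h1 : IntermediateField.fixedField (M₁.fixingSubgroup ⊔ M₂.fixingSubgroup) = ⊥ := by
        rw [← hMinf]
        refine le_antisymm (fun x hx => ?_) ?_
        · constructor
          · rw [← IsGalois.fixedField_fixingSubgroup M₁]
            exact fun σ => hx ⟨σ.1, Subgroup.mem_sup_left σ.2⟩
          · rw [← IsGalois.fixedField_fixingSubgroup M₂]
            exact fun σ => hx ⟨σ.1, Subgroup.mem_sup_right σ.2⟩
        · rw [hMinf]
          exact bot_le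
      calc M₁.fixingSubgroup ⊔ M₂.fixingSubgroup
          = IntermediateField.fixingSubgroup
            (IntermediateField.fixedField (M₁.fixingSubgroup ⊔ M₂.fixingSubgroup)) :=
            (IntermediateField.fixingSubgroup_fixedField _).symm
        _ = ⊤ := by
            rw [h1]
            refine le_antisymm le_top fun σ _ => ?_
            intro x
            obtain ⟨c, hc⟩ := IntermediateField.mem_bot.1 x.2
            have : (x : N) = algebraMap L N c := hc.symm
            rw [this]
            exact σ.commutes c
    -- induction over the generated subgroup
    have key : ∀ τ : N ≃ₐ[L] N,
        τ ∈ Subgroup.closure ((M₁.fixingSubgroup : Set (N ≃ₐ[L] N)) ∪ M₂.fixingSubgroup) →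
        ∀ ρ : N ≃ₐ[L] N, g ((ρ * τ).toAlgHom.comp φ) = g (ρ.toAlgHom.comp φ) := by
      intro τ hτ
      induction hτ using Subgroup.closure_induction with
      | mem s hs =>
        intro ρ
        rcases hs with hs | hs
        · -- s fixes M₁, so restrictions to L₁ agree
          show f₁ _ = f₁ _
          congr 1
          ext x
          have hx : φ (L₁.val x) ∈ M₁ := ⟨x, rfl⟩
          have hfix : s (φ (L₁.val x)) = φ (L₁.val x) := hs ⟨_, hx⟩
          simp only [AlgHom.comp_apply, AlgEquiv.toAlgHom_eq_coe, AlgHom.coe_coe,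
            AlgEquiv.mul_apply]
          exact congrArg (fun y => N.val (ρ y)) hfix
        · -- s fixes M₂, so restrictions to L₂ agree
          rw [hg₂, hg₂]
          congr 1
          ext x
          have hx : φ (L₂.val x) ∈ M₂ := ⟨x, rfl⟩
          have hfix : s (φ (L₂.val x)) = φ (L₂.val x) := hs ⟨_, hx⟩
          simp only [AlgHom.comp_apply, AlgEquiv.toAlgHom_eq_coe, AlgHom.coe_coe,
            AlgEquiv.mul_apply]
          exact congrArg (fun y => N.val (ρ y)) hfix
      | one =>
        intro ρ
        rw [mul_one]
      | mul x y hx hy hx' hy' =>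
        intro ρ
        rw [← mul_assoc]
        rw [hy' (ρ * x), hx' ρ]
      | inv x hx hx' =>
        intro ρ
        have := hx' (ρ * x⁻¹)
        rw [mul_assoc, inv_mul_cancel, mul_one] at this
        exact this.symm
    have hστ : σ ∈ Subgroup.closure
        ((M₁.fixingSubgroup : Set (N ≃ₐ[L] N)) ∪ M₂.fixingSubgroup) := by
      rw [← Subgroup.sup_eq_closure, hsup]
      trivial
    have := key σ hστ 1
    rw [one_mul] at this
    have hl : (σ.toAlgHom.comp φ) = φ' := by ext x; exact congrArg Subtype.val (hσ x)
    have hr : ((1 : N ≃ₐ[L] N).toAlgHom.comp φ) = φ := by ext x; rfl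
    rw [hl] at this
    rw [hr] at this
    exact this.symm ▸ this
  -- now conclude
  obtain ⟨ι⟩ : Nonempty (L₃ →ₐ[L] Ω) := ⟨IsAlgClosed.lift⟩
  refine ⟨f₁ (ι.comp L₁.val), fun ψ => ?_, fun ψ => ?_⟩
  · obtain ⟨φ, hφ⟩ := aux_extend L₁ ψ
    have : g (cores φ) = g (cores ι) := hconst _ _
    simpa only [g, hcores, hφ] using this
  · obtain ⟨φ, hφ⟩ := aux_extend L₂ ψ
    have : g (cores φ) = g (cores ι) := hconst _ _
    rw [hg₂ (cores φ)] at this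
    simp only [g, hcores, hφ] at this
    exact this
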